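/- Let K be an algebraically closed field that is complete with respect to a nontrivial nonarchimedean multiplicative norm. Let f ∈ K[X] be a monic polynomial of degree d ≥ 2, with filled Julia set 𝒦_f = {x ∈ K : the orbit (f^[n](x))_{n≥0} is bounded in norm}. Suppose r > 0 is the radius of a minimal closed ball containing 𝒦_f, i.e., 𝒦_f ⊆ B̄(z₀, r) for some z₀ ∈ K and every closed ball containing 𝒦_f has radius ≥ r. Then for any point x₀ ∈ 𝒦_f, the filled Julia set is contained in the union of the closed balls of radius r^{−1/d} centered at the roots of f(f(X)) − x₀: 𝒦_f ⊆ ⋃_{x : f(f(x)) = x₀} B̄(x, r^{−1/d}). -/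

import Mathlib

open Polynomial

/-- The orbit of `x` under evaluation of the polynomial `f` is bounded in norm. -/
def BoundedOrbit {K : Type*} [NormedField K] (f : K[X]) (x : K) : Prop :=
  ∃ C : ℝ, ∀ n : ℕ, ‖(fun y => f.eval y)^[n] x‖ ≤ C

section Helpers

variable {K : Type*} [NormedField K]

lemma bo_eval {f : K[X]} {x : K} (h : BoundedOrbit f x) : BoundedOrbit f (f.eval x) := by
  obtain ⟨C, hC⟩ := h
  refine ⟨C, fun n => ?_⟩
  have h1 := hC (n + 1)
  rwa [Function.iterate_succ_apply] at h1

lemma bo_of_eval {f : K[X]} {x : K} (h : BoundedOrbit f (f.eval x)) : BoundedOrbit f x := by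
  obtain ⟨C, hC⟩ := h
  refine ⟨max C ‖x‖, fun n => ?_⟩
  cases n with
  | zero => simp
  | succ n =>
      refine le_trans (le_of_eq ?_) (le_trans (hC n) (le_max_left _ _))
      rw [Function.iterate_succ_apply]

lemma norm_multiset_prod' (s : Multiset K) : ‖s.prod‖ = (s.map fun z => ‖z‖).prod := by
  induction s using Multiset.induction with
  | empty => simp
  | cons a s ih => simp [norm_mul, ih]

lemma pow_card_le_prod' (s : Multiset ℝ) (m : ℝ) (hm : 0 ≤ m) (h : ∀ b ∈ s, m ≤ b) :
    m ^ Multiset.card s ≤ s.prod := by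
  induction s using Multiset.induction with
  | empty => simp
  | cons a s ih =>
      have ha : m ≤ a := h a (Multiset.mem_cons_self a s)
      have hs : m ^ Multiset.card s ≤ s.prod := ih fun b hb => h b (Multiset.mem_cons_of_mem hb)
      simp only [Multiset.card_cons, pow_succ, Multiset.prod_cons]
      calc m ^ Multiset.card s * m ≤ s.prod * a :=
        mul_le_mul hs ha hm (le_trans (pow_nonneg hm _) hs)
      _ = a * s.prod := mul_comm _ _

end Helpers

section AlgClosed

variable {K : Type*} [NormedField K] [IsAlgClosed K]

lemma norm_eval_eq_prod {p : K[X]} (hp : p.Monic) (x : K) :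
    ‖p.eval x‖ = (p.roots.map fun b => ‖x - b‖).prod := by
  conv_lhs => rw [(IsAlgClosed.splits p).eq_prod_roots_of_monic hp]
  rw [eval_multiset_prod, Multiset.map_map, norm_multiset_prod', Multiset.map_map]
  simp [Function.comp]

lemma roots_card_eq {p : K[X]} (hp : p.Monic) : Multiset.card p.roots = p.natDegree :=
  (splits_iff_card_roots).mp (IsAlgClosed.splits p)

/-- there is a root of `p` within `s ^ (1/n)` of `x`. -/
lemma exists_root_close {p : K[X]} (hp : p.Monic) {n : ℕ} (hn : 0 < n)
    (hdeg : p.natDegree = n) {x : K} {s : ℝ} (hs : 0 ≤ s) (h : ‖p.eval x‖ ≤ s) :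
    ∃ b ∈ p.roots, ‖x - b‖ ≤ s ^ ((1 : ℝ) / n) := by
  classical
  have hcard : Multiset.card p.roots = n := (roots_card_eq hp).trans hdeg
  have hne : p.roots ≠ 0 := by
    intro h0; rw [h0] at hcard; simp at hcard; omega
  obtain ⟨b, hb, hbmin⟩ := Finset.exists_min_image p.roots.toFinset (fun b => ‖x - b‖)
    (Multiset.toFinset_nonempty.mpr hne)
  rw [Multiset.mem_toFinset] at hb
  refine ⟨b, hb, ?_⟩
  have hmin : ∀ c ∈ p.roots, ‖x - b‖ ≤ ‖x - c‖ := fun c hc =>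
    hbmin c (Multiset.mem_toFinset.mpr hc)
  have hpow : ‖x - b‖ ^ n ≤ s := by
    calc ‖x - b‖ ^ n = ‖x - b‖ ^ Multiset.card (p.roots.map fun c => ‖x - c‖) := by
          rw [Multiset.card_map, hcard]
      _ ≤ (p.roots.map fun c => ‖x - c‖).prod := by
          refine pow_card_le_prod' _ _ (norm_nonneg _) ?_
          intro y hy
          obtain ⟨c, hc, rfl⟩ := Multiset.mem_map.mp hy
          exact hmin c hc
      _ = ‖p.eval x‖ := (norm_eval_eq_prod hp x).symm
      _ ≤ s := h
  have h1 : ‖x - b‖ = (‖x - b‖ ^ n) ^ ((1 : ℝ) / n) := by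
    rw [← Real.rpow_natCast (‖x - b‖) n, ← Real.rpow_mul (norm_nonneg _)]
    rw [mul_one_div, div_self (by positivity), Real.rpow_one]
  rw [h1]
  exact Real.rpow_le_rpow (by positivity) hpow (by positivity)

end AlgClosed

section Main

variable {K : Type*} [NormedField K]

lemma monic_sub_C' {p : K[X]} (hp : p.Monic) (h : 0 < p.natDegree) (c : K) :
    (p - C c).Monic := by
  have hdegpos : 0 < p.degree := Polynomial.natDegree_pos_iff_degree_pos.mp h
  have hlt : degree (-(C c)) < degree p :=
    lt_of_le_of_lt ((degree_neg (C c)).le.trans degree_C_le) hdegpos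
  simpa [sub_eq_add_neg] using hp.add_of_left hlt

end Main


/-- Benedetto's lemma, second containment: over an algebraically closed, complete,
nonarchimedean nontrivially normed field, if `r` is the radius of a minimal closed ball
containing the filled Julia set of a monic polynomial `f` of degree `d ≥ 2`, then for any
`x₀` in the filled Julia set, the filled Julia set is contained in the union of the closed
balls of radius `r^(-1/d)` about the roots of `f(f(X)) - x₀`. -/
theorem filledJulia_subset_small_balls
    {K : Type*} [NontriviallyNormedField K] [IsAlgClosed K] [CompleteSpace K]
    [IsUltrametricDist K]
    (f : K[X]) (d : ℕ) (hd : 2 ≤ d) (hmonic : f.Monic) (hdeg : f.natDegree = d)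
    (r : ℝ) (hr : 0 < r)
    (z₀ : K) (hcover : {x : K | BoundedOrbit f x} ⊆ Metric.closedBall z₀ r)
    (hmin : ∀ (z : K) (s : ℝ), {x : K | BoundedOrbit f x} ⊆ Metric.closedBall z s → r ≤ s)
    (x₀ : K) (hx₀ : BoundedOrbit f x₀) :
    {x : K | BoundedOrbit f x} ⊆
      ⋃ x ∈ {x : K | f.eval (f.eval x) = x₀}, Metric.closedBall x (r ^ (-(1 : ℝ) / d)) := by
  classical
  intro x hx
  simp only [Set.mem_setOf_eq] at hx
  have hd0 : (0 : ℕ) < d := by omega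
  have hdR : (0 : ℝ) < (d : ℝ) := by exact_mod_cast hd0
  have hdist : ∀ u v : K, BoundedOrbit f u → BoundedOrbit f v → ‖u - v‖ ≤ r := by
    intro u v hu hv
    have h1 : dist u z₀ ≤ r := hcover hu
    have h2 : dist z₀ v ≤ r := by rw [dist_comm]; exact hcover hv
    calc ‖u - v‖ = dist u v := (dist_eq_norm u v).symm
      _ ≤ max (dist u z₀) (dist z₀ v) := IsUltrametricDist.dist_triangle_max u z₀ v
      _ ≤ r := max_le h1 h2
  simp only [Set.mem_iUnion, Set.mem_setOf_eq, Metric.mem_closedBall, exists_prop]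
  rcases le_or_gt r 1 with hr1 | hr1
  · -- case r ≤ 1 : use roots of f ∘ f - x₀ directly
    set p : K[X] := f.comp f - C x₀ with hp_def
    have hfcnd : (f.comp f).natDegree = d * d := by rw [natDegree_comp, hdeg]
    have hfcm : (f.comp f).Monic := by
      unfold Polynomial.Monic
      rw [leadingCoeff_comp (by omega : f.natDegree ≠ 0)]
      simp [hmonic.leadingCoeff]
    have hpm : p.Monic := monic_sub_C' hfcm (by rw [hfcnd]; positivity) x₀
    have hpnd : p.natDegree = d * d := by rw [hp_def, natDegree_sub_C, hfcnd]
    have hpev : ∀ y : K, p.eval y = f.eval (f.eval y) - x₀ := by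
      intro y; simp [hp_def, eval_comp]
    have hb1 : ‖p.eval x‖ ≤ r := by
      rw [hpev]; exact hdist _ _ (bo_eval (bo_eval hx)) hx₀
    obtain ⟨b, hbmem, hbclose⟩ :=
      exists_root_close hpm (by positivity : 0 < d * d) hpnd hr.le hb1
    have hbroot : f.eval (f.eval b) = x₀ := by
      have := (Polynomial.mem_roots'.mp hbmem).2
      rw [Polynomial.IsRoot, hpev] at this
      exact sub_eq_zero.mp this
    refine ⟨b, hbroot, ?_⟩
    rw [dist_eq_norm]
    refine le_trans hbclose ?_
    refine Real.rpow_le_rpow_of_exponent_ge hr hr1 ?_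
    rw [Nat.cast_mul]
    calc -(1:ℝ)/d ≤ 0 := by rw [neg_div, neg_nonpos]; positivity
      _ ≤ 1/((d:ℝ)*(d:ℝ)) := by positivity
  · -- case 1 < r : two-step argument
    -- step 1: find a root `a` of `f - x₀` close to `f x`
    have hg_monic : (f - C x₀).Monic := monic_sub_C' hmonic (by omega) x₀
    have hg_nd : (f - C x₀).natDegree = d := by rw [natDegree_sub_C, hdeg]
    have hb1 : ‖(f - C x₀).eval (f.eval x)‖ ≤ r := by
      rw [eval_sub, eval_C]
      exact hdist _ _ (bo_eval (bo_eval hx)) hx₀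
    obtain ⟨a, hamem, haclose⟩ := exists_root_close hg_monic hd0 hg_nd hr.le hb1
    have haroot : f.eval a = x₀ := by
      have := (Polynomial.mem_roots'.mp hamem).2
      rw [Polynomial.IsRoot, eval_sub, eval_C] at this
      exact sub_eq_zero.mp this
    have haK : BoundedOrbit f a := bo_of_eval (by rw [haroot]; exact hx₀)
    -- the polynomial `q = f - C a`
    set q : K[X] := f - C a with hq_def
    have hq_monic : q.Monic := monic_sub_C' hmonic (by omega) a
    have hq_nd : q.natDegree = d := by rw [hq_def, natDegree_sub_C, hdeg]
    have hq_card : Multiset.card q.roots = d := (roots_card_eq hq_monic).trans hq_nd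
    have hq_ne : q.roots ≠ 0 := by
      intro h0; rw [h0] at hq_card; simp at hq_card; omega
    have hq_ev : ∀ y : K, q.eval y = f.eval y - a := by
      intro y; rw [hq_def, eval_sub, eval_C]
    -- the roots of q cannot all be within distance < r of x
    have hspread : ∃ b' ∈ q.roots, r ≤ ‖x - b'‖ := by
      by_contra hcon
      push_neg at hcon
      have hTne : q.roots.toFinset.Nonempty := Multiset.toFinset_nonempty.mpr hq_ne
      set s : ℝ := q.roots.toFinset.sup' hTne (fun b => ‖x - b‖) with hs_def
      have hslt : s < r := (Finset.sup'_lt_iff hTne).mpr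
        (fun b hb => hcon b (Multiset.mem_toFinset.mp hb))
      have hsub : {y : K | BoundedOrbit f y} ⊆
          Metric.closedBall x (max s (r ^ ((1:ℝ)/d))) := by
        intro z hz
        simp only [Set.mem_setOf_eq] at hz
        have hzb : ‖q.eval z‖ ≤ r := by
          rw [hq_ev]; exact hdist _ _ (bo_eval hz) haK
        obtain ⟨b, hb, hbz⟩ := exists_root_close hq_monic hd0 hq_nd hr.le hzb
        have h1 : dist z b ≤ r ^ ((1:ℝ)/d) := by rw [dist_eq_norm]; exact hbz
        have h2 : dist b x ≤ s :=
          le_trans (le_of_eq (by rw [dist_eq_norm, norm_sub_rev]))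
            (Finset.le_sup' (fun c => ‖x - c‖) (Multiset.mem_toFinset.mpr hb))
        rw [Metric.mem_closedBall]
        calc dist z x ≤ max (dist z b) (dist b x) := IsUltrametricDist.dist_triangle_max z b x
          _ ≤ max (r ^ ((1:ℝ)/d)) s := max_le_max h1 h2
          _ = max s (r ^ ((1:ℝ)/d)) := max_comm _ _
      have hge := hmin x _ hsub
      have hrd : r ^ ((1:ℝ)/d) < r := by
        calc r ^ ((1:ℝ)/d) < r ^ (1:ℝ) :=
              Real.rpow_lt_rpow_of_exponent_lt hr1 (by
                rw [div_lt_one hdR]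
                exact_mod_cast by omega)
          _ = r := Real.rpow_one r
      exact absurd hge (not_le.mpr (max_lt hslt hrd))
    obtain ⟨b', hb'mem, hb'far⟩ := hspread
    -- the closest root b of q to x
    obtain ⟨b, hbT, hbmin⟩ := Finset.exists_min_image q.roots.toFinset (fun c => ‖x - c‖)
      (Multiset.toFinset_nonempty.mpr hq_ne)
    rw [Multiset.mem_toFinset] at hbT
    have hbmin' : ∀ c ∈ q.roots, ‖x - b‖ ≤ ‖x - c‖ := fun c hc =>
      hbmin c (Multiset.mem_toFinset.mpr hc)
    set m : ℝ := ‖x - b‖ with hm_def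
    have hm0 : 0 ≤ m := norm_nonneg _
    -- product bound: r * m^(d-1) ≤ r^(1/d)
    have hprod_le : (q.roots.map fun c => ‖x - c‖).prod ≤ r ^ ((1:ℝ)/d) := by
      rw [← norm_eval_eq_prod hq_monic x, hq_ev]
      exact haclose
    have hprod_ge : r * m ^ (d - 1) ≤ (q.roots.map fun c => ‖x - c‖).prod := by
      have hsplit : q.roots = b' ::ₘ q.roots.erase b' := (Multiset.cons_erase hb'mem).symm
      rw [hsplit, Multiset.map_cons, Multiset.prod_cons]
      have hcardE : Multiset.card (q.roots.erase b') = d - 1 := by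
        rw [Multiset.card_erase_of_mem hb'mem, hq_card]; rfl
      have hE : m ^ (d - 1) ≤ ((q.roots.erase b').map fun c => ‖x - c‖).prod := by
        have := pow_card_le_prod' ((q.roots.erase b').map fun c => ‖x - c‖) m hm0
          (fun y hy => by
            obtain ⟨c, hc, rfl⟩ := Multiset.mem_map.mp hy
            exact hbmin' c (Multiset.mem_of_mem_erase hc))
        rwa [Multiset.card_map, hcardE] at this
      exact mul_le_mul hb'far hE (pow_nonneg hm0 _) (le_trans hr.le hb'far)
    have hkey : r * m ^ (d - 1) ≤ r ^ ((1:ℝ)/d) := le_trans hprod_ge hprod_le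
    -- conclude m ≤ r ^ (-(1)/d)
    have hmle : m ≤ r ^ (-(1:ℝ)/d) := by
      have hpow_eq : (r ^ (-(1:ℝ)/d)) ^ (d - 1) = r ^ ((1:ℝ)/d) / r := by
        rw [← Real.rpow_natCast (r ^ (-(1:ℝ)/d)) (d - 1), ← Real.rpow_mul hr.le]
        have hcast : ((d - 1 : ℕ) : ℝ) = (d : ℝ) - 1 := by
          have : (1:ℕ) ≤ d := by omega
          push_cast [this]; ring
        rw [hcast]
        have hexp : -(1:ℝ)/d * ((d:ℝ) - 1) = 1/(d:ℝ) - 1 := by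
          field_simp
          ring
        rw [hexp, Real.rpow_sub hr, Real.rpow_one]
      have h2 : m ^ (d - 1) ≤ (r ^ (-(1:ℝ)/d)) ^ (d - 1) := by
        rw [hpow_eq, le_div_iff₀ hr, mul_comm]
        exact hkey
      exact (pow_le_pow_iff_left₀ hm0 (Real.rpow_nonneg hr.le _) (by omega : d - 1 ≠ 0)).mp h2
    have hbroot : f.eval (f.eval b) = x₀ := by
      have := (Polynomial.mem_roots'.mp hbT).2
      rw [Polynomial.IsRoot, hq_ev] at this
      rw [sub_eq_zero.mp this, haroot]
    exact ⟨b, hbroot, by rw [dist_eq_norm]; exact hmle⟩
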